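/- Let j ≥ 1 be an integer and let (a^{(n)})_{n≥0} be complex numbers. Suppose there are nonzero complex numbers u_1, …, u_j with |u_1| > |u_2| > … > |u_j|, nonzero complex constants c_1, …, c_j, reals ϱ with 0 < ϱ < |u_j| and μ > 0, and a sequence (b^{(n)})_{n≥0} with |b^{(n)}| ≤ μ ϱ^n, such that a^{(n)} = Σ_{ℓ=1}^{j} c_ℓ u_ℓ^{n+1} + b^{(n)} for all n ≥ 0. Then there exist a constant c_j' (independent of n) and K > 0 such that |H_j^{(n)} − c_j' (u_1 u_2 ⋯ u_j)^n| ≤ K (|u_1 u_2 ⋯ u_{j−1}| ϱ)^n for all n ≥ 0. -/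

import Mathlib

open Finset Matrix


lemma exists_detCML (j : ℕ) :
    ∃ f : ContinuousMultilinearMap ℂ (fun _ : Fin j => (Fin j → ℂ)) ℂ,
      ‖f‖ ≤ (j.factorial : ℝ) ∧ ∀ M : Matrix (Fin j) (Fin j) ℂ, f (fun i => M i) = M.det := by
  have H : ∀ m : Fin j → (Fin j → ℂ),
      ‖(Matrix.detRowAlternating (R := ℂ) (n := Fin j)).toMultilinearMap m‖
        ≤ (j.factorial : ℝ) * ∏ i, ‖m i‖ := by
    intro m
    have : (Matrix.detRowAlternating (R := ℂ) (n := Fin j)).toMultilinearMap m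
        = Matrix.det (Matrix.of m) := rfl
    rw [this, Matrix.det_apply]
    refine (norm_sum_le _ _).trans ?_
    have hterm : ∀ σ : Equiv.Perm (Fin j),
        ‖Equiv.Perm.sign σ • ∏ i, Matrix.of m (σ i) i‖ ≤ ∏ i, ‖m i‖ := by
      intro σ
      have h1 : ‖Equiv.Perm.sign σ • ∏ i, Matrix.of m (σ i) i‖
          = ‖∏ i, m (σ i) i‖ := by
        rcases Int.units_eq_one_or (Equiv.Perm.sign σ) with h | h <;>
          simp [h, Matrix.of_apply]
      rw [h1]
      have h2 : ‖∏ i, m (σ i) i‖ ≤ ∏ i, ‖m (σ i)‖ := by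
        rw [norm_prod]
        exact Finset.prod_le_prod (fun i _ => norm_nonneg _)
          (fun i _ => norm_le_pi_norm (m (σ i)) i)
      refine h2.trans_eq ?_
      exact Equiv.prod_comp σ (fun i => ‖m i‖)
    calc ∑ σ : Equiv.Perm (Fin j), ‖Equiv.Perm.sign σ • ∏ i, Matrix.of m (σ i) i‖
        ≤ ∑ _σ : Equiv.Perm (Fin j), ∏ i, ‖m i‖ := Finset.sum_le_sum fun σ _ => hterm σ
      _ = (j.factorial : ℝ) * ∏ i, ‖m i‖ := by
          rw [Finset.sum_const, Finset.card_univ, Fintype.card_perm, Fintype.card_fin, nsmul_eq_mul]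
  refine ⟨(Matrix.detRowAlternating (R := ℂ) (n := Fin j)).toMultilinearMap.mkContinuous
    (j.factorial : ℝ) H, ?_, ?_⟩
  · exact MultilinearMap.mkContinuous_norm_le _ (by positivity) H
  · intro M
    rfl



/-- The Hankel determinant: `H_0^{(n)} = 1` and for `j ≥ 1`,
`H_j^{(n)} = det (a^{(n+s+ℓ)})_{s,ℓ = 0,…,j-1}`. -/
noncomputable def hankel (a : ℕ → ℂ) (j n : ℕ) : ℂ :=
  Matrix.det (Matrix.of fun s ℓ : Fin j => a (n + (s : ℕ) + (ℓ : ℕ)))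

/- STATEMENT 3: asymptotic expansion of the Hankel determinant. -/
set_option maxHeartbeats 2000000 in
theorem hankel_asymptotic
    (j : ℕ) (hj : 1 ≤ j)
    (a b : ℕ → ℂ)
    (u c : Fin j → ℂ) (ϱ μ : ℝ)
    (hu0 : ∀ ℓ, u ℓ ≠ 0)
    (hudec : ∀ ℓ₁ ℓ₂ : Fin j, ℓ₁ < ℓ₂ → ‖u ℓ₂‖ < ‖u ℓ₁‖)
    (hc : ∀ ℓ, c ℓ ≠ 0)
    (hϱpos : 0 < ϱ) (hϱlt : ϱ < ‖u ⟨j - 1, by omega⟩‖) (hμ : 0 < μ)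
    (hb : ∀ n : ℕ, ‖b n‖ ≤ μ * ϱ ^ n)
    (ha : ∀ n : ℕ, a n = (∑ ℓ, c ℓ * u ℓ ^ (n + 1)) + b n) :
    ∃ c' : ℂ, ∃ K > 0, ∀ n : ℕ,
      ‖hankel a j n - c' * (∏ ℓ, u ℓ) ^ n‖ ≤
        K * ((∏ ℓ ∈ Finset.univ.erase (⟨j - 1, by omega⟩ : Fin j), ‖u ℓ‖) * ϱ) ^ n := by
  classical
  obtain ⟨jm, hjm⟩ : ∃ jm : Fin j, jm = ⟨j - 1, by omega⟩ := ⟨_, rfl⟩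
  obtain ⟨umin, humin⟩ : ∃ umin : ℝ, umin = ‖u jm‖ := ⟨_, rfl⟩
  have humin_pos : (0:ℝ) < umin := humin ▸ norm_pos_iff.mpr (hu0 jm)
  have hϱlt' : ϱ < umin := by rw [humin, hjm]; exact hϱlt
  have humin_le : ∀ k : Fin j, umin ≤ ‖u k‖ := by
    intro k
    by_cases hk : (k : ℕ) = j - 1
    · have : k = jm := by rw [hjm]; exact Fin.ext hk
      rw [humin, this]
    · have hklt : k < jm := by
        rw [hjm, Fin.lt_def]
        have := k.2
        simp only
        omega
      rw [humin]
      exact (hudec k jm hklt).le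
  have huinj : Function.Injective u := by
    intro k l h
    by_contra hne
    rcases Ne.lt_or_gt hne with hkl | hkl
    · exact (hudec k l hkl).ne (congrArg norm h).symm
    · exact (hudec l k hkl).ne (congrArg norm h)
  -- the Vandermonde matrix and derived data, introduced opaquely
  obtain ⟨A, hA⟩ : ∃ A : Matrix (Fin j) (Fin j) ℂ, A = (Matrix.vandermonde u)ᵀ := ⟨_, rfl⟩
  obtain ⟨F, hF⟩ : ∃ F : Matrix (Fin j) (Fin j) ℂ, F = (Aᵀ)⁻¹ := ⟨_, rfl⟩
  obtain ⟨E, hE⟩ : ∃ E : Matrix (Fin j) (Fin j) ℂ, E = A⁻¹ := ⟨_, rfl⟩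
  have hdetA : A.det ≠ 0 := by
    rw [hA, Matrix.det_transpose, Matrix.det_vandermonde]
    refine Finset.prod_ne_zero_iff.mpr fun i _ => Finset.prod_ne_zero_iff.mpr fun k hk => ?_
    have hik : i < k := Finset.mem_Ioi.mp hk
    exact sub_ne_zero.mpr fun hEq => hik.ne' (huinj hEq)
  have hAval : ∀ s k : Fin j, A s k = u k ^ (s : ℕ) := by
    intro s k; rw [hA]; rfl
  obtain ⟨d, hd⟩ : ∃ d : ℕ → Fin j → ℂ, d = fun n k => c k * u k ^ (n + 1) := ⟨_, rfl⟩
  have hd0 : ∀ n k, d n k ≠ 0 := fun n k => by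
    rw [hd]; exact mul_ne_zero (hc k) (pow_ne_zero _ (hu0 k))
  obtain ⟨P, hP⟩ : ∃ P : ℕ → Matrix (Fin j) (Fin j) ℂ,
    P = fun n => A * Matrix.diagonal (d n) * Aᵀ := ⟨_, rfl⟩
  obtain ⟨B, hB⟩ : ∃ B : ℕ → Matrix (Fin j) (Fin j) ℂ,
    B = fun n => Matrix.of fun s ℓ : Fin j => b (n + (s:ℕ) + (ℓ:ℕ)) := ⟨_, rfl⟩
  have hMP : ∀ n, (Matrix.of fun s ℓ : Fin j => a (n + (s:ℕ) + (ℓ:ℕ))) = P n + B n := by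
    intro n
    ext s ℓ
    have hPval : (P n) s ℓ = ∑ k, u k ^ (s:ℕ) * (c k * u k ^ (n+1)) * u k ^ (ℓ:ℕ) := by
      rw [hP]
      show ((A * Matrix.diagonal (d n)) * Aᵀ) s ℓ = _
      rw [Matrix.mul_apply]
      refine Finset.sum_congr rfl fun k _ => ?_
      rw [Matrix.mul_diagonal, Matrix.transpose_apply, hAval, hAval, hd]
    rw [Matrix.add_apply, hPval, Matrix.of_apply, ha, hB]
    simp only [Matrix.of_apply]
    congr 1
    refine Finset.sum_congr rfl fun k _ => ?_
    have he : n + (s:ℕ) + (ℓ:ℕ) + 1 = (s:ℕ) + (n+1) + (ℓ:ℕ) := by ring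
    rw [he, pow_add, pow_add]
    ring
  obtain ⟨c', hc'⟩ : ∃ c' : ℂ, c' = A.det ^ 2 * ∏ k, (c k * u k) := ⟨_, rfl⟩
  have hdetP : ∀ n, (P n).det = c' * (∏ k, u k) ^ n := by
    intro n
    rw [hP]
    show (A * Matrix.diagonal (d n) * Aᵀ).det = _
    rw [Matrix.det_mul, Matrix.det_mul, Matrix.det_diagonal,
      show Aᵀ.det = A.det from Matrix.det_transpose A]
    have hprodd : ∏ k, d n k = (∏ k, (c k * u k)) * (∏ k, u k) ^ n := by
      rw [← Finset.prod_pow, ← Finset.prod_mul_distrib]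
      refine Finset.prod_congr rfl fun k _ => ?_
      rw [hd]
      ring
    rw [hprodd, hc']
    ring
  have hAT : IsUnit (Aᵀ).det := by
    rw [Matrix.det_transpose]; exact hdetA.isUnit
  obtain ⟨X, hX⟩ : ∃ X : ℕ → Matrix (Fin j) (Fin j) ℂ,
    X = fun n => F * (Matrix.diagonal (fun k => (d n k)⁻¹) * (E * B n)) := ⟨_, rfl⟩
  have hPX : ∀ n, P n * X n = B n := by
    intro n
    have hdiag : Matrix.diagonal (d n) * Matrix.diagonal (fun k => (d n k)⁻¹) = 1 := by
      rw [Matrix.diagonal_mul_diagonal]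
      have h1 : (fun i => d n i * (d n i)⁻¹) = fun _ => (1:ℂ) :=
        funext fun k => mul_inv_cancel₀ (hd0 n k)
      rw [h1, Matrix.diagonal_one]
    rw [hP, hX, hF, hE]
    calc (A * Matrix.diagonal (d n) * Aᵀ) *
          ((Aᵀ)⁻¹ * (Matrix.diagonal (fun k => (d n k)⁻¹) * (A⁻¹ * B n)))
        = (A * Matrix.diagonal (d n)) *
            (Aᵀ * ((Aᵀ)⁻¹ * (Matrix.diagonal (fun k => (d n k)⁻¹) * (A⁻¹ * B n)))) := by
          rw [Matrix.mul_assoc (A * Matrix.diagonal (d n)) Aᵀ]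
      _ = (A * Matrix.diagonal (d n)) * (Matrix.diagonal (fun k => (d n k)⁻¹) * (A⁻¹ * B n)) := by
          rw [Matrix.mul_nonsing_inv_cancel_left _ _ hAT]
      _ = A * ((Matrix.diagonal (d n) * Matrix.diagonal (fun k => (d n k)⁻¹)) * (A⁻¹ * B n)) := by
          rw [Matrix.mul_assoc, Matrix.mul_assoc]
      _ = A * (A⁻¹ * B n) := by rw [hdiag, one_mul]
      _ = B n := Matrix.mul_nonsing_inv_cancel_left _ _ hdetA.isUnit
  have hhank : ∀ n, hankel a j n = (P n).det * (1 + X n).det := by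
    intro n
    have h1 : (Matrix.of fun s ℓ : Fin j => a (n + (s:ℕ) + (ℓ:ℕ))) = P n * (1 + X n) := by
      rw [Matrix.mul_add, Matrix.mul_one, hPX, hMP]
    rw [hankel, h1, Matrix.det_mul]
  -- entrywise constants
  obtain ⟨α, hα1, hαF, hαE⟩ : ∃ α : ℝ, 1 ≤ α ∧ (∀ p q, ‖F p q‖ ≤ α) ∧ (∀ p q, ‖E p q‖ ≤ α) := by
    have hF0 : (0:ℝ) ≤ ∑ p, ∑ q, ‖F p q‖ :=
      Finset.sum_nonneg fun _ _ => Finset.sum_nonneg fun _ _ => norm_nonneg _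
    have hE0 : (0:ℝ) ≤ ∑ p, ∑ q, ‖E p q‖ :=
      Finset.sum_nonneg fun _ _ => Finset.sum_nonneg fun _ _ => norm_nonneg _
    refine ⟨(∑ p, ∑ q, ‖F p q‖) + ((∑ p, ∑ q, ‖E p q‖) + 1), by linarith, ?_, ?_⟩
    · intro p q
      have h1 : ‖F p q‖ ≤ ∑ q', ‖F p q'‖ :=
        Finset.single_le_sum (fun i _ => norm_nonneg _) (Finset.mem_univ q)
      have h2 : (∑ q', ‖F p q'‖) ≤ ∑ p', ∑ q', ‖F p' q'‖ :=
        Finset.single_le_sum (f := fun p' => ∑ q', ‖F p' q'‖)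
          (fun i _ => Finset.sum_nonneg fun _ _ => norm_nonneg _) (Finset.mem_univ p)
      linarith
    · intro p q
      have h1 : ‖E p q‖ ≤ ∑ q', ‖E p q'‖ :=
        Finset.single_le_sum (fun i _ => norm_nonneg _) (Finset.mem_univ q)
      have h2 : (∑ q', ‖E p q'‖) ≤ ∑ p', ∑ q', ‖E p' q'‖ :=
        Finset.single_le_sum (f := fun p' => ∑ q', ‖E p' q'‖)
          (fun i _ => Finset.sum_nonneg fun _ _ => norm_nonneg _) (Finset.mem_univ p)
      linarith
  have hα0 : (0:ℝ) < α := lt_of_lt_of_le one_pos hα1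
  obtain ⟨γ, hγ0, hγc⟩ : ∃ γ : ℝ, 0 < γ ∧ ∀ k, ‖c k‖⁻¹ ≤ γ := by
    have hs : (0:ℝ) ≤ ∑ k, ‖c k‖⁻¹ :=
      Finset.sum_nonneg fun _ _ => inv_nonneg.mpr (norm_nonneg _)
    refine ⟨(∑ k, ‖c k‖⁻¹) + 1, by linarith, fun k => ?_⟩
    have := Finset.single_le_sum (f := fun k => ‖c k‖⁻¹)
      (fun i _ => inv_nonneg.mpr (norm_nonneg _)) (Finset.mem_univ k)
    linarith
  have hdinv : ∀ n k, ‖(d n k)⁻¹‖ ≤ γ * (umin⁻¹) ^ (n + 1) := by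
    intro n k
    have hdval : d n k = c k * u k ^ (n+1) := by rw [hd]
    rw [hdval, mul_inv, norm_mul, norm_inv, norm_inv, norm_pow, ← inv_pow]
    have h1 : ‖u k‖⁻¹ ≤ umin⁻¹ := inv_anti₀ humin_pos (humin_le k)
    exact mul_le_mul (hγc k) (pow_le_pow_left₀ (by positivity) h1 _) (by positivity) hγ0.le
  obtain ⟨M₁, hM₁⟩ : ∃ M₁ : ℝ, M₁ = (max 1 ϱ) ^ (2 * j) := ⟨_, rfl⟩
  have hM₁1 : (1:ℝ) ≤ M₁ := by rw [hM₁]; exact one_le_pow₀ (le_max_left 1 ϱ)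
  have hBb : ∀ (n : ℕ) (t ℓ : Fin j), ‖b (n + (t:ℕ) + (ℓ:ℕ))‖ ≤ μ * M₁ * ϱ ^ n := by
    intro n t ℓ
    refine (hb _).trans ?_
    have h2 : ϱ ^ ((t:ℕ) + (ℓ:ℕ)) ≤ M₁ := by
      rw [hM₁]
      refine (pow_le_pow_left₀ hϱpos.le (le_max_right 1 ϱ) _).trans ?_
      refine pow_le_pow_right₀ (le_max_left 1 ϱ) ?_
      have := t.2; have := ℓ.2; omega
    have h3 : (0:ℝ) ≤ μ * ϱ ^ n := by positivity
    calc μ * ϱ ^ (n + (t:ℕ) + (ℓ:ℕ)) = (μ * ϱ ^ n) * ϱ ^ ((t:ℕ) + (ℓ:ℕ)) := by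
          rw [Nat.add_assoc, pow_add]; ring
      _ ≤ (μ * ϱ ^ n) * M₁ := mul_le_mul_of_nonneg_left h2 h3
      _ = μ * M₁ * ϱ ^ n := by ring
  obtain ⟨q, hqdef⟩ : ∃ q : ℝ, q = ϱ * umin⁻¹ := ⟨_, rfl⟩
  have hq0 : 0 < q := by rw [hqdef]; positivity
  have hq1 : q < 1 := by
    rw [hqdef, ← div_eq_mul_inv]
    exact (div_lt_one humin_pos).mpr hϱlt'
  have hjR : (0:ℝ) < (j:ℝ) := by exact_mod_cast Nat.lt_of_lt_of_le Nat.zero_lt_one hj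
  obtain ⟨β, hβdef⟩ : ∃ β : ℝ, β = (j:ℝ)^2 * α^2 * γ * μ * M₁ * umin⁻¹ := ⟨_, rfl⟩
  have hβ0 : 0 < β := by
    rw [hβdef]
    exact mul_pos (mul_pos (mul_pos (mul_pos (mul_pos (pow_pos hjR 2) (pow_pos hα0 2)) hγ0)
      hμ) (lt_of_lt_of_le one_pos hM₁1)) (inv_pos.mpr humin_pos)
  have hXb : ∀ (n : ℕ) (s ℓ : Fin j), ‖X n s ℓ‖ ≤ β * q ^ n := by
    intro n s ℓ
    have hXentry : X n s ℓ
        = ∑ k, F s k * ((d n k)⁻¹ * ∑ t, E k t * b (n + (t:ℕ) + (ℓ:ℕ))) := by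
      rw [hX]
      show (F * (Matrix.diagonal (fun k => (d n k)⁻¹) * (E * B n))) s ℓ = _
      rw [Matrix.mul_apply]
      refine Finset.sum_congr rfl fun k _ => ?_
      rw [Matrix.diagonal_mul, Matrix.mul_apply]
      congr 1
      congr 1
      refine Finset.sum_congr rfl fun t _ => ?_
      rw [hB]
      rfl
    rw [hXentry]
    have hterm : ∀ k : Fin j, ‖F s k * ((d n k)⁻¹ * ∑ t, E k t * b (n + (t:ℕ) + (ℓ:ℕ)))‖
        ≤ α * (γ * (umin⁻¹)^(n+1) * ((j:ℝ) * (α * (μ * M₁ * ϱ^n)))) := by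
      intro k
      rw [norm_mul, norm_mul]
      have hsum : ‖∑ t, E k t * b (n + (t:ℕ) + (ℓ:ℕ))‖ ≤ (j:ℝ) * (α * (μ * M₁ * ϱ^n)) := by
        refine (norm_sum_le _ _).trans ?_
        have hone : ∀ t : Fin j, ‖E k t * b (n + (t:ℕ) + (ℓ:ℕ))‖ ≤ α * (μ * M₁ * ϱ^n) := by
          intro t
          rw [norm_mul]
          have hb' := hBb n t ℓ
          have := hαE k t
          have h0 : (0:ℝ) ≤ μ * M₁ * ϱ^n := by positivity
          exact mul_le_mul this (by linarith) (norm_nonneg _) hα0.le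
        calc ∑ t, ‖E k t * b (n + (t:ℕ) + (ℓ:ℕ))‖
            ≤ ∑ _t : Fin j, α * (μ * M₁ * ϱ^n) := Finset.sum_le_sum fun t _ => hone t
          _ = (j:ℝ) * (α * (μ * M₁ * ϱ^n)) := by
              rw [Finset.sum_const, Finset.card_univ, Fintype.card_fin, nsmul_eq_mul]
      have hd' := hdinv n k
      have h0 : (0:ℝ) ≤ γ * (umin⁻¹)^(n+1) := by positivity
      refine mul_le_mul (hαF s k) (mul_le_mul hd' hsum (norm_nonneg _) h0) ?_ hα0.le
      positivity
    calc ‖∑ k, F s k * ((d n k)⁻¹ * ∑ t, E k t * b (n + (t:ℕ) + (ℓ:ℕ)))‖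
        ≤ ∑ k, ‖F s k * ((d n k)⁻¹ * ∑ t, E k t * b (n + (t:ℕ) + (ℓ:ℕ)))‖ := norm_sum_le _ _
      _ ≤ ∑ _k : Fin j, α * (γ * (umin⁻¹)^(n+1) * ((j:ℝ) * (α * (μ * M₁ * ϱ^n)))) :=
          Finset.sum_le_sum fun k _ => hterm k
      _ = (j:ℝ) * (α * (γ * (umin⁻¹)^(n+1) * ((j:ℝ) * (α * (μ * M₁ * ϱ^n))))) := by
          rw [Finset.sum_const, Finset.card_univ, Fintype.card_fin, nsmul_eq_mul]
      _ = β * q ^ n := by rw [hβdef, hqdef]; ring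
  -- the determinant as a continuous multilinear map
  obtain ⟨f, hfnorm, hfdet⟩ := exists_detCML j
  have hqn1 : ∀ n : ℕ, q ^ n ≤ 1 := fun n => pow_le_one₀ hq0.le hq1.le
  have hdet1 : ∀ n, ‖(1 + X n).det - 1‖
      ≤ (j.factorial : ℝ) * j * (1 + β)^(j-1) * (β * q^n) := by
    intro n
    have h1 : (1 + X n).det - 1
        = f (fun i => (1 + X n) i) - f (fun i => (1 : Matrix (Fin j) (Fin j) ℂ) i) := by
      rw [hfdet, hfdet, Matrix.det_one]
    rw [h1]
    have key := f.norm_image_sub_le (fun i => (1 + X n) i)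
      (fun i => (1 : Matrix (Fin j) (Fin j) ℂ) i)
    have hone : ‖fun i => (1 : Matrix (Fin j) (Fin j) ℂ) i‖ ≤ 1 := by
      rw [pi_norm_le_iff_of_nonneg zero_le_one]
      intro i
      rw [pi_norm_le_iff_of_nonneg zero_le_one]
      intro t
      rcases eq_or_ne i t with rfl | h
      · simp [Matrix.one_apply_eq]
      · simp [Matrix.one_apply_ne h]
    have hdiffeq : ((fun i => (1 + X n) i) - fun i => (1 : Matrix (Fin j) (Fin j) ℂ) i)
        = fun i => X n i := by
      funext i t
      simp [Matrix.add_apply]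
    have hdiffnorm : ‖(fun i => (1 + X n) i) - fun i => (1 : Matrix (Fin j) (Fin j) ℂ) i‖
        ≤ β * q^n := by
      rw [hdiffeq, pi_norm_le_iff_of_nonneg (by positivity)]
      intro i
      rw [pi_norm_le_iff_of_nonneg (by positivity)]
      exact fun t => hXb n i t
    have hm1 : ‖fun i => (1 + X n) i‖ ≤ 1 + β := by
      have h2 : (fun i => (1 + X n) i)
          = (fun i => (1 : Matrix (Fin j) (Fin j) ℂ) i)
            + ((fun i => (1 + X n) i) - fun i => (1 : Matrix (Fin j) (Fin j) ℂ) i) := by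
        abel
      rw [h2]
      refine (norm_add_le _ _).trans ?_
      have := hqn1 n
      have hb1 : β * q ^ n ≤ β := by nlinarith
      linarith [hdiffnorm, hone]
    have hmax : max ‖fun i => (1 + X n) i‖ ‖fun i => (1 : Matrix (Fin j) (Fin j) ℂ) i‖
        ≤ 1 + β := max_le hm1 (by linarith [hone])
    refine key.trans ?_
    rw [Fintype.card_fin]
    have hmaxpow : max ‖fun i => (1 + X n) i‖ ‖fun i => (1 : Matrix (Fin j) (Fin j) ℂ) i‖ ^ (j-1)
        ≤ (1 + β)^(j-1) :=
      pow_le_pow_left₀ (le_max_of_le_right (norm_nonneg _)) hmax _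
    have hf0 : (0:ℝ) ≤ ‖f‖ := norm_nonneg _
    have hd0' : (0:ℝ) ≤ ‖(fun i => (1 + X n) i) - fun i => (1 : Matrix (Fin j) (Fin j) ℂ) i‖ :=
      norm_nonneg _
    have hmp0 : (0:ℝ) ≤ max ‖fun i => (1 + X n) i‖
        ‖fun i => (1 : Matrix (Fin j) (Fin j) ℂ) i‖ ^ (j-1) :=
      pow_nonneg (le_max_of_le_right (norm_nonneg _)) _
    refine mul_le_mul (mul_le_mul (mul_le_mul hfnorm le_rfl hjR.le
      (Nat.cast_nonneg _)) hmaxpow hmp0 (by positivity)) hdiffnorm hd0'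
      (mul_nonneg (by positivity) (pow_nonneg (by linarith) _))
  -- final assembly
  have hprodq : (∏ k, ‖u k‖) * q = (∏ k ∈ Finset.univ.erase jm, ‖u k‖) * ϱ := by
    rw [hqdef, ← Finset.mul_prod_erase Finset.univ (fun k => ‖u k‖) (Finset.mem_univ jm),
      ← humin]
    field_simp
  have hKnn : (0:ℝ) ≤ ‖c'‖ * ((j.factorial : ℝ) * j * (1+β)^(j-1) * β) :=
    mul_nonneg (norm_nonneg _) (mul_nonneg (mul_nonneg (mul_nonneg (Nat.cast_nonneg _)
      (Nat.cast_nonneg _)) (pow_nonneg (by linarith) _)) hβ0.le)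
  refine ⟨c', ‖c'‖ * ((j.factorial : ℝ) * j * (1+β)^(j-1) * β) + 1, by linarith, fun n => ?_⟩
  have hPn : ‖(P n).det‖ = ‖c'‖ * (∏ k, ‖u k‖)^n := by
    rw [hdetP n, norm_mul, norm_pow, norm_prod]
  have hsplit : hankel a j n - c' * (∏ k, u k)^n = (P n).det * ((1 + X n).det - 1) := by
    rw [hhank n, hdetP n]
    ring
  have hprodnn : (0:ℝ) ≤ ∏ k, ‖u k‖ := Finset.prod_nonneg fun _ _ => norm_nonneg _
  have hRnn : (0:ℝ) ≤ ((∏ k ∈ Finset.univ.erase jm, ‖u k‖) * ϱ)^n := by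
    have h : (0:ℝ) ≤ ∏ k ∈ Finset.univ.erase jm, ‖u k‖ :=
      Finset.prod_nonneg fun _ _ => norm_nonneg _
    exact pow_nonneg (mul_nonneg h hϱpos.le) n
  have hmain : ‖hankel a j n - c' * (∏ k, u k)^n‖
      ≤ (‖c'‖ * ((j.factorial : ℝ) * j * (1+β)^(j-1) * β))
        * ((∏ k ∈ Finset.univ.erase jm, ‖u k‖) * ϱ)^n := by
    rw [hsplit, norm_mul, hPn]
    calc ‖c'‖ * (∏ k, ‖u k‖)^n * ‖(1 + X n).det - 1‖
        ≤ ‖c'‖ * (∏ k, ‖u k‖)^n * ((j.factorial : ℝ) * j * (1+β)^(j-1) * (β * q^n)) := by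
          exact mul_le_mul_of_nonneg_left (hdet1 n)
            (mul_nonneg (norm_nonneg _) (pow_nonneg hprodnn n))
      _ = (‖c'‖ * ((j.factorial : ℝ) * j * (1+β)^(j-1) * β)) * ((∏ k, ‖u k‖) * q)^n := by
          rw [mul_pow]
          ring
      _ = (‖c'‖ * ((j.factorial : ℝ) * j * (1+β)^(j-1) * β))
            * ((∏ k ∈ Finset.univ.erase jm, ‖u k‖) * ϱ)^n := by rw [hprodq]
  calc ‖hankel a j n - c' * (∏ k, u k)^n‖
      ≤ (‖c'‖ * ((j.factorial : ℝ) * j * (1+β)^(j-1) * β))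
        * ((∏ k ∈ Finset.univ.erase jm, ‖u k‖) * ϱ)^n := hmain
    _ ≤ (‖c'‖ * ((j.factorial : ℝ) * j * (1+β)^(j-1) * β) + 1)
        * ((∏ k ∈ Finset.univ.erase jm, ‖u k‖) * ϱ)^n := by
          refine mul_le_mul_of_nonneg_right (by linarith) hRnn
    _ = (‖c'‖ * ((j.factorial : ℝ) * j * (1+β)^(j-1) * β) + 1)
        * ((∏ ℓ ∈ Finset.univ.erase (⟨j - 1, by omega⟩ : Fin j), ‖u ℓ‖) * ϱ)^n := by
          rw [hjm]
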